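/- (Isospectrality of the Calogero–Sutherland Hamiltonians.) Let N ≥ 1, let b be a real number, let x ∈ ℝ^N satisfy sin(x_i − x_j) ≠ 0 for all i ≠ j, and let f : ℝ^N → ℝ be twice continuously differentiable at x. For each i set G_i(y) = b² Σ_{j ≠ i} cot(y_i − y_j), defined on a neighbourhood of x. Then −(1/2) Σ_{i=1}^{N} [ ∂_i(∂_i f − G_i f)(x) + G_i(x)·(∂_i f(x) − G_i(x) f(x)) ] = −(1/2) Σ_{i=1}^{N} ∂_i² f(x) + b²(b²−1) Σ_{1 ≤ i < j ≤ N} f(x)/sin²(x_i − x_j) − (b⁴/6)·N(N−1)(N+1)·f(x); that is, the Hamiltonian H̃_CS = −(1/2) Σ_i (∂_i + ∂_i ln Π_{j<k} sin^{b²}(x_j − x_k))(∂_i − ∂_i ln Π_{j<k} sin^{b²}(x_j − x_k)) equals H_CS = −(1/2) Σ_i ∂_i² + Σ_{i<j} b²(b²−1)/sin²(x_i − x_j) shifted by the constant −(b⁴/6)N(N−1)(N+1). -/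

import Mathlib

open Finset


lemma cot_hasDerivAt {y : ℝ} (hy : Real.sin y ≠ 0) :
    HasDerivAt Real.cot (-(1 / Real.sin y ^ 2)) y := by
  have h := (Real.hasDerivAt_cos y).div (Real.hasDerivAt_sin y) hy
  have e : Real.cot = fun z => Real.cos z / Real.sin z := funext fun z => Real.cot_eq_cos_div_sin z
  rw [e]
  refine h.congr_deriv ?_
  rw [← Real.sin_sq_add_cos_sq y]
  ring

lemma cot_sq' {y : ℝ} (hy : Real.sin y ≠ 0) :
    Real.cot y ^ 2 = 1 / Real.sin y ^ 2 - 1 := by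
  rw [Real.cot_eq_cos_div_sin]
  field_simp
  nlinarith [Real.sin_sq_add_cos_sq y]

lemma triple_cot' {a b c : ℝ} (hab : Real.sin (a - b) ≠ 0) (hac : Real.sin (a - c) ≠ 0)
    (hbc : Real.sin (b - c) ≠ 0) :
    Real.cot (a - b) * Real.cot (a - c) + Real.cot (b - c) * Real.cot (b - a)
      + Real.cot (c - a) * Real.cot (c - b) = -1 := by
  have hba : Real.sin (b - a) ≠ 0 := by rw [show b - a = -(a-b) by ring, Real.sin_neg]; simpa
  have hca : Real.sin (c - a) ≠ 0 := by rw [show c - a = -(a-c) by ring, Real.sin_neg]; simpa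
  have hcb : Real.sin (c - b) ≠ 0 := by rw [show c - b = -(b-c) by ring, Real.sin_neg]; simpa
  simp only [Real.cot_eq_cos_div_sin]
  field_simp
  simp only [Real.sin_sub, Real.cos_sub]
  ring_nf

noncomputable def CSw (N : ℕ) (x : Fin N → ℝ) (t : Fin N × Fin N × Fin N) : ℝ :=
  if t.2.1 ≠ t.1 ∧ t.2.2 ≠ t.1 ∧ t.2.2 ≠ t.2.1 then
    Real.cot (x t.1 - x t.2.1) * Real.cot (x t.1 - x t.2.2) else 0

lemma CSw_cyc (N : ℕ) (x : Fin N → ℝ)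
    (hx : ∀ i j : Fin N, i ≠ j → Real.sin (x i - x j) ≠ 0) (i j k : Fin N) :
    CSw N x (i, j, k) + CSw N x (j, k, i) + CSw N x (k, i, j)
      = if j ≠ i ∧ k ≠ i ∧ k ≠ j then (-1 : ℝ) else 0 := by
  by_cases h1 : j = i
  · simp_all [CSw]
  by_cases h2 : k = i
  · simp_all [CSw]
  by_cases h3 : k = j
  · simp_all [CSw]
  have h1' : ¬ i = j := fun e => h1 e.symm
  have h2' : ¬ i = k := fun e => h2 e.symm
  have h3' : ¬ j = k := fun e => h3 e.symm
  simp only [CSw, h1, h2, h3, h1', h2', h3', ne_eq, not_false_iff, and_self, if_true]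
  exact triple_cot' (hx i j (Ne.symm h1)) (hx i k (Ne.symm h2)) (hx j k (Ne.symm h3))

lemma count_triples (N : ℕ) :
    ∑ i : Fin N, ∑ j ∈ univ.filter (fun j => j ≠ i),
        ∑ _k ∈ (univ.filter (fun j => j ≠ i)).erase j, (1 : ℝ)
      = (N:ℝ) * ((N:ℝ) - 1) * ((N:ℝ) - 2) := by
  have hcard1 : ∀ i : Fin N, (univ.filter (fun j => j ≠ i)).card = N - 1 := by
    intro i
    rw [Finset.filter_ne', Finset.card_erase_of_mem (mem_univ i), Finset.card_univ,
      Fintype.card_fin]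
  have hcard2 : ∀ i j : Fin N, j ≠ i →
      ((univ.filter (fun j' => j' ≠ i)).erase j).card = N - 2 := by
    intro i j hji
    rw [Finset.card_erase_of_mem (by simp [hji]), hcard1 i]
    omega
  calc ∑ i : Fin N, ∑ j ∈ univ.filter (fun j => j ≠ i),
        ∑ _k ∈ (univ.filter (fun j => j ≠ i)).erase j, (1 : ℝ)
      = ∑ i : Fin N, ∑ j ∈ univ.filter (fun j => j ≠ i), ((N:ℝ) - 2) := by
        refine Finset.sum_congr rfl fun i _ => Finset.sum_congr rfl fun j hj => ?_
        have hji : j ≠ i := by simpa using hj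
        rw [Finset.sum_const, hcard2 i j hji, nsmul_eq_mul]
        match N, Nat.lt_or_ge N 2 with
        | 0, _ => exact i.elim0
        | 1, _ => exact absurd (Subsingleton.elim j i) hji
        | (n+2), _ => push_cast [Nat.add_sub_cancel]; ring
    _ = (N:ℝ) * ((N:ℝ) - 1) * ((N:ℝ) - 2) := by
        rw [Finset.sum_congr rfl fun i (_ : i ∈ univ) => Finset.sum_const ((N:ℝ) - 2)]
        simp only [hcard1, Finset.sum_const, Finset.card_univ, Fintype.card_fin,
          nsmul_eq_mul]
        match N with
        | 0 => simp
        | (n+1) => push_cast [Nat.add_sub_cancel]; ring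

lemma triple_sum (N : ℕ) (x : Fin N → ℝ)
    (hx : ∀ i j : Fin N, i ≠ j → Real.sin (x i - x j) ≠ 0) :
    ∑ i : Fin N, ∑ j ∈ univ.filter (fun j => j ≠ i),
        ∑ k ∈ (univ.filter (fun j => j ≠ i)).erase j,
          Real.cot (x i - x j) * Real.cot (x i - x k)
      = -((N:ℝ) * ((N:ℝ) - 1) * ((N:ℝ) - 2)) / 3 := by
  classical
  have h1 : ∑ i : Fin N, ∑ j ∈ univ.filter (fun j => j ≠ i),
        ∑ k ∈ (univ.filter (fun j => j ≠ i)).erase j,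
          Real.cot (x i - x j) * Real.cot (x i - x k)
      = ∑ t : Fin N × Fin N × Fin N, CSw N x t := by
    rw [Fintype.sum_prod_type]
    refine Finset.sum_congr rfl fun i _ => ?_
    rw [Fintype.sum_prod_type]
    rw [Finset.sum_filter]
    refine Finset.sum_congr rfl fun j _ => ?_
    by_cases hji : j ≠ i
    · rw [if_pos hji]
      have he : (univ.filter (fun j' => j' ≠ i)).erase j
          = univ.filter (fun k => k ≠ i ∧ k ≠ j) := by
        ext k; simp [and_comm]
      rw [he, Finset.sum_filter]
      refine Finset.sum_congr rfl fun k _ => ?_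
      simp only [CSw]
      by_cases hki : k ≠ i <;> by_cases hkj : k ≠ j <;>
        simp [hji, hki, hkj]
    · rw [if_neg hji]
      push_neg at hji
      subst hji
      refine (Finset.sum_eq_zero fun k _ => ?_).symm
      simp [CSw]
  rw [h1]
  set e : (Fin N × Fin N × Fin N) ≃ (Fin N × Fin N × Fin N) :=
    ⟨fun t => (t.2.1, t.2.2, t.1), fun t => (t.2.2, t.1, t.2.1),
      fun t => rfl, fun t => rfl⟩ with he
  have hcyc : ∑ t : Fin N × Fin N × Fin N, CSw N x (e t) = ∑ t, CSw N x t :=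
    Fintype.sum_equiv e _ _ (fun t => rfl)
  have hcyc2 : ∑ t : Fin N × Fin N × Fin N, CSw N x (e (e t)) = ∑ t, CSw N x t := by
    have := Fintype.sum_equiv e (fun t => CSw N x (e (e t))) (fun s => CSw N x (e s))
      (fun t => rfl)
    rw [this, hcyc]
  have h3 : (3 : ℝ) * ∑ t : Fin N × Fin N × Fin N, CSw N x t
      = ∑ t : Fin N × Fin N × Fin N,
          (CSw N x t + CSw N x (e t) + CSw N x (e (e t))) := by
    rw [Finset.sum_add_distrib, Finset.sum_add_distrib, hcyc, hcyc2]; ring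
  have h4 : ∑ t : Fin N × Fin N × Fin N,
        (CSw N x t + CSw N x (e t) + CSw N x (e (e t)))
      = -((N:ℝ) * ((N:ℝ) - 1) * ((N:ℝ) - 2)) := by
    have hpt : ∀ t : Fin N × Fin N × Fin N,
        CSw N x t + CSw N x (e t) + CSw N x (e (e t))
          = if t.2.1 ≠ t.1 ∧ t.2.2 ≠ t.1 ∧ t.2.2 ≠ t.2.1 then (-1 : ℝ) else 0 := by
      rintro ⟨i, j, k⟩
      exact CSw_cyc N x hx i j k
    rw [Finset.sum_congr rfl fun t _ => hpt t]
    have : ∑ t : Fin N × Fin N × Fin N,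
        (if t.2.1 ≠ t.1 ∧ t.2.2 ≠ t.1 ∧ t.2.2 ≠ t.2.1 then (-1 : ℝ) else 0)
      = -(∑ t : Fin N × Fin N × Fin N,
          (if t.2.1 ≠ t.1 ∧ t.2.2 ≠ t.1 ∧ t.2.2 ≠ t.2.1 then (1 : ℝ) else 0)) := by
      have step : ∑ t : Fin N × Fin N × Fin N,
          (if t.2.1 ≠ t.1 ∧ t.2.2 ≠ t.1 ∧ t.2.2 ≠ t.2.1 then (-1 : ℝ) else 0)
        = ∑ t : Fin N × Fin N × Fin N,
          (-(if t.2.1 ≠ t.1 ∧ t.2.2 ≠ t.1 ∧ t.2.2 ≠ t.2.1 then (1 : ℝ) else 0)) := by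
        refine Finset.sum_congr rfl fun t _ => ?_
        split_ifs <;> simp
      rw [step, Finset.sum_neg_distrib]
    rw [this]
    congr 1
    have h5 : ∑ t : Fin N × Fin N × Fin N,
        (if t.2.1 ≠ t.1 ∧ t.2.2 ≠ t.1 ∧ t.2.2 ≠ t.2.1 then (1 : ℝ) else 0)
      = ∑ i : Fin N, ∑ j ∈ univ.filter (fun j => j ≠ i),
          ∑ _k ∈ (univ.filter (fun j => j ≠ i)).erase j, (1 : ℝ) := by
      rw [Fintype.sum_prod_type]
      refine Finset.sum_congr rfl fun i _ => ?_
      rw [Fintype.sum_prod_type, Finset.sum_filter]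
      refine Finset.sum_congr rfl fun j _ => ?_
      by_cases hji : j ≠ i
      · rw [if_pos hji]
        have he2 : (univ.filter (fun j' => j' ≠ i)).erase j
            = univ.filter (fun k => k ≠ i ∧ k ≠ j) := by
          ext k; simp [and_comm]
        rw [he2, Finset.sum_filter]
        refine Finset.sum_congr rfl fun k _ => ?_
        by_cases hki : k ≠ i <;> by_cases hkj : k ≠ j <;> simp [hji, hki, hkj]
      · rw [if_neg hji]
        push_neg at hji
        subst hji
        refine Finset.sum_eq_zero fun k _ => ?_
        simp
    rw [h5, count_triples]
  have := h3.trans h4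
  linarith

lemma pair_count (N : ℕ) :
    ∑ i : Fin N, ∑ _j ∈ univ.filter (fun j => j ≠ i), (1 : ℝ)
      = (N:ℝ) * ((N:ℝ) - 1) := by
  have hcard1 : ∀ i : Fin N, (univ.filter (fun j => j ≠ i)).card = N - 1 := by
    intro i
    rw [Finset.filter_ne', Finset.card_erase_of_mem (mem_univ i), Finset.card_univ,
      Fintype.card_fin]
  simp only [Finset.sum_const, hcard1, nsmul_eq_mul, mul_one, Finset.card_univ,
    Fintype.card_fin]
  match N with
  | 0 => simp
  | (n+1) => push_cast [Nat.add_sub_cancel]; ring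

lemma pair_symm (N : ℕ) (x : Fin N → ℝ) :
    ∑ i : Fin N, ∑ j ∈ univ.filter (fun j => j ≠ i), 1 / Real.sin (x i - x j) ^ 2
      = 2 * ∑ i : Fin N, ∑ j ∈ univ.filter (fun j => i < j), 1 / Real.sin (x i - x j) ^ 2 := by
  have hr : ∀ i j : Fin N, 1 / Real.sin (x j - x i) ^ 2 = 1 / Real.sin (x i - x j) ^ 2 := by
    intro i j
    rw [show x j - x i = -(x i - x j) by ring, Real.sin_neg]
    ring_nf
  have split : ∀ i : Fin N, ∑ j ∈ univ.filter (fun j => j ≠ i), 1 / Real.sin (x i - x j) ^ 2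
      = (∑ j ∈ univ.filter (fun j => i < j), 1 / Real.sin (x i - x j) ^ 2)
        + ∑ j ∈ univ.filter (fun j => j < i), 1 / Real.sin (x i - x j) ^ 2 := by
    intro i
    rw [Finset.sum_filter, Finset.sum_filter, Finset.sum_filter, ← Finset.sum_add_distrib]
    refine Finset.sum_congr rfl fun j _ => ?_
    rcases lt_trichotomy i j with h | h | h
    · simp [h, h.ne', not_lt_of_gt h]
    · simp [h]
    · simp [h, h.ne, not_lt_of_gt h]
  rw [Finset.sum_congr rfl fun i _ => split i, Finset.sum_add_distrib]
  have swap : ∑ i : Fin N, ∑ j ∈ univ.filter (fun j => j < i), 1 / Real.sin (x i - x j) ^ 2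
      = ∑ i : Fin N, ∑ j ∈ univ.filter (fun j => i < j), 1 / Real.sin (x i - x j) ^ 2 := by
    simp only [Finset.sum_filter]
    rw [Finset.sum_comm]
    refine Finset.sum_congr rfl fun i _ => Finset.sum_congr rfl fun j _ => ?_
    by_cases h : i < j
    · rw [if_pos h, if_pos h, hr]
    · rw [if_neg h, if_neg h]
  rw [swap]; ring

lemma cs_alg (N : ℕ) (b : ℝ) (x : Fin N → ℝ)
    (hx : ∀ i j : Fin N, i ≠ j → Real.sin (x i - x j) ≠ 0) :
    ∑ i : Fin N,
        (b ^ 2 * ∑ j ∈ univ.filter (fun j => j ≠ i), -(1 / Real.sin (x i - x j) ^ 2)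
          + (b ^ 2 * ∑ j ∈ univ.filter (fun j => j ≠ i), Real.cot (x i - x j)) ^ 2)
      = 2 * (b ^ 2 * (b ^ 2 - 1)) *
          (∑ i : Fin N, ∑ j ∈ univ.filter (fun j => i < j), 1 / Real.sin (x i - x j) ^ 2)
        - b ^ 4 / 3 * (N:ℝ) * ((N:ℝ) - 1) * ((N:ℝ) + 1) := by
  have sq_expand : ∀ i : Fin N,
      (∑ j ∈ univ.filter (fun j => j ≠ i), Real.cot (x i - x j)) ^ 2
        = (∑ j ∈ univ.filter (fun j => j ≠ i), (1 / Real.sin (x i - x j) ^ 2 - 1))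
          + ∑ j ∈ univ.filter (fun j => j ≠ i),
              ∑ k ∈ (univ.filter (fun j => j ≠ i)).erase j,
                Real.cot (x i - x j) * Real.cot (x i - x k) := by
    intro i
    rw [sq, Finset.sum_mul_sum, ← Finset.sum_add_distrib]
    refine Finset.sum_congr rfl fun j hj => ?_
    have hji : j ≠ i := by simpa using hj
    rw [← Finset.add_sum_erase _ _ hj, ← cot_sq' (hx i j (Ne.symm hji)), sq]
  -- rewrite the summand
  have expand : ∀ i : Fin N,
      b ^ 2 * ∑ j ∈ univ.filter (fun j => j ≠ i), -(1 / Real.sin (x i - x j) ^ 2)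
        + (b ^ 2 * ∑ j ∈ univ.filter (fun j => j ≠ i), Real.cot (x i - x j)) ^ 2
      = (b ^ 4 - b ^ 2) * (∑ j ∈ univ.filter (fun j => j ≠ i), 1 / Real.sin (x i - x j) ^ 2)
        + (-(b ^ 4)) * (∑ _j ∈ univ.filter (fun j => j ≠ i), (1:ℝ))
        + b ^ 4 * (∑ j ∈ univ.filter (fun j => j ≠ i),
              ∑ k ∈ (univ.filter (fun j => j ≠ i)).erase j,
                Real.cot (x i - x j) * Real.cot (x i - x k)) := by
    intro i
    rw [mul_pow, sq_expand i, Finset.sum_sub_distrib, Finset.sum_neg_distrib]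
    simp only [one_div]
    ring
  rw [Finset.sum_congr rfl fun i _ => expand i, Finset.sum_add_distrib,
    Finset.sum_add_distrib, ← Finset.mul_sum, ← Finset.mul_sum, ← Finset.mul_sum]
  rw [triple_sum N x hx, pair_count N, pair_symm N x]
  ring

lemma CS_key (N : ℕ) (b : ℝ) (x : Fin N → ℝ)
    (hx : ∀ i j : Fin N, i ≠ j → Real.sin (x i - x j) ≠ 0)
    (f : (Fin N → ℝ) → ℝ) (hf : ContDiffAt ℝ 2 f x)
    (G : Fin N → (Fin N → ℝ) → ℝ)
    (hG : ∀ (i : Fin N) (y : Fin N → ℝ),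
      G i y = b ^ 2 * ∑ j ∈ univ.filter (fun j => j ≠ i), Real.cot (y i - y j))
    (i : Fin N) :
    fderiv ℝ (fun y => fderiv ℝ f y (Pi.single i 1) - G i y * f y) x (Pi.single i 1)
        + G i x * (fderiv ℝ f x (Pi.single i 1) - G i x * f x)
      = fderiv ℝ (fun y => fderiv ℝ f y (Pi.single i 1)) x (Pi.single i 1)
        - (b ^ 2 * ∑ j ∈ univ.filter (fun j => j ≠ i), -(1 / Real.sin (x i - x j) ^ 2)
           + (b ^ 2 * ∑ j ∈ univ.filter (fun j => j ≠ i), Real.cot (x i - x j)) ^ 2) * f x := by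
  have hf1 : DifferentiableAt ℝ f x := hf.differentiableAt (by norm_num)
  have hf2 : ContDiffAt ℝ 1 (fderiv ℝ f) x := hf.fderiv_right (le_refl 2)
  set L : (Fin N → ℝ) →L[ℝ] ℝ :=
    b ^ 2 • ∑ j ∈ univ.filter (fun j => j ≠ i),
      (-(1 / Real.sin (x i - x j) ^ 2)) •
        (ContinuousLinearMap.proj (R := ℝ) (φ := fun _ : Fin N => ℝ) i
          - ContinuousLinearMap.proj j) with hL
  have hGi : HasFDerivAt (G i) L x := by
    have hsum : HasFDerivAt (fun y : Fin N → ℝ =>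
        ∑ j ∈ univ.filter (fun j => j ≠ i), Real.cot (y i - y j))
        (∑ j ∈ univ.filter (fun j => j ≠ i),
          (-(1 / Real.sin (x i - x j) ^ 2)) •
            (ContinuousLinearMap.proj (R := ℝ) (φ := fun _ : Fin N => ℝ) i
              - ContinuousLinearMap.proj j)) x := by
      apply HasFDerivAt.fun_sum
      intro j hj
      have hji : j ≠ i := by simpa using hj
      have hd := cot_hasDerivAt (hx i j (Ne.symm hji))
      have hsub : HasFDerivAt (fun y : Fin N → ℝ => y i - y j)
          ((ContinuousLinearMap.proj (R := ℝ) (φ := fun _ : Fin N => ℝ) i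
            - ContinuousLinearMap.proj j)) x :=
        ((ContinuousLinearMap.proj (R := ℝ) (φ := fun _ : Fin N => ℝ) i)
          - (ContinuousLinearMap.proj j)).hasFDerivAt
      exact hd.comp_hasFDerivAt x hsub
    have := hsum.const_mul (b ^ 2)
    have hGe : G i = fun y : Fin N → ℝ =>
        b ^ 2 * ∑ j ∈ univ.filter (fun j => j ≠ i), Real.cot (y i - y j) :=
      funext (hG i)
    rw [hGe, hL]
    exact this
  have hLval : L (Pi.single i 1)
      = b ^ 2 * ∑ j ∈ univ.filter (fun j => j ≠ i), -(1 / Real.sin (x i - x j) ^ 2) := by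
    rw [hL]
    simp only [ContinuousLinearMap.smul_apply, ContinuousLinearMap.sum_apply,
      ContinuousLinearMap.sub_apply, ContinuousLinearMap.proj_apply, smul_eq_mul]
    congr 1
    refine Finset.sum_congr rfl fun j hj => ?_
    have hji : j ≠ i := by simpa using hj
    rw [Pi.single_eq_same, Pi.single_eq_of_ne hji]
    ring
  have hφ : DifferentiableAt ℝ (fun y => fderiv ℝ f y (Pi.single i 1)) x :=
    (hf2.differentiableAt one_ne_zero).clm_apply (differentiableAt_const _)
  have hprod : HasFDerivAt (fun y => G i y * f y)
      (G i x • fderiv ℝ f x + f x • L) x := hGi.mul hf1.hasFDerivAt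
  have hdiff : HasFDerivAt (fun y => fderiv ℝ f y (Pi.single i 1) - G i y * f y)
      (fderiv ℝ (fun y => fderiv ℝ f y (Pi.single i 1)) x
        - (G i x • fderiv ℝ f x + f x • L)) x :=
    hφ.hasFDerivAt.sub hprod
  rw [hdiff.fderiv]
  simp only [ContinuousLinearMap.sub_apply, ContinuousLinearMap.add_apply,
    ContinuousLinearMap.smul_apply, smul_eq_mul, hLval, hG i x]
  ring


theorem CS_isospectral (N : ℕ) (hN : 1 ≤ N) (b : ℝ) (x : Fin N → ℝ)
    (hx : ∀ i j : Fin N, i ≠ j → Real.sin (x i - x j) ≠ 0)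
    (f : (Fin N → ℝ) → ℝ) (hf : ContDiffAt ℝ 2 f x)
    (G : Fin N → (Fin N → ℝ) → ℝ)
    (hG : ∀ (i : Fin N) (y : Fin N → ℝ),
      G i y = b ^ 2 * ∑ j ∈ univ.filter (fun j => j ≠ i), Real.cot (y i - y j)) :
    -(1 / 2) * ∑ i : Fin N,
        (fderiv ℝ (fun y => fderiv ℝ f y (Pi.single i 1) - G i y * f y) x (Pi.single i 1)
          + G i x * (fderiv ℝ f x (Pi.single i 1) - G i x * f x))
      = -(1 / 2) * ∑ i : Fin N,
            fderiv ℝ (fun y => fderiv ℝ f y (Pi.single i 1)) x (Pi.single i 1)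
        + b ^ 2 * (b ^ 2 - 1) *
            ∑ i : Fin N, ∑ j ∈ univ.filter (fun j => i < j),
              f x / Real.sin (x i - x j) ^ 2
        - b ^ 4 / 6 * (N : ℝ) * ((N : ℝ) - 1) * ((N : ℝ) + 1) * f x := by
  rw [Finset.sum_congr rfl fun i _ => CS_key N b x hx f hf G hG i,
    Finset.sum_sub_distrib, ← Finset.sum_mul]
  have hdiv : ∑ i : Fin N, ∑ j ∈ univ.filter (fun j => i < j),
        f x / Real.sin (x i - x j) ^ 2
      = f x * ∑ i : Fin N, ∑ j ∈ univ.filter (fun j => i < j),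
          1 / Real.sin (x i - x j) ^ 2 := by
    rw [Finset.mul_sum]
    refine Finset.sum_congr rfl fun i _ => ?_
    rw [Finset.mul_sum]
    exact Finset.sum_congr rfl fun j _ => by ring
  rw [hdiv, cs_alg N b x hx]
  ring
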